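/- Let d1, d2 be positive real numbers and t a real number, and let c be a real number. Suppose x1, x2 are positive real numbers satisfying the two Lagrange equations (the Einstein equations for the scalar curvature under the volume constraint): -d1/(2*x1^2) + t*x2/(2*x1^3) - c*d1*x1^(d1-1)*x2^d2 = 0 and (t - d2)/(2*x2^2) - t/(4*x1^2) - c*d2*x1^d1*x2^(d2-1) = 0, where powers with real exponents are real powers (rpow) of the positive bases. Then 2*t*d1*x1^2 - 2*d1*d2*x1^2 - t*d1*x2^2 + 2*d1*d2*x1*x2 - 2*t*d2*x2^2 = 0. -/

import Mathlib

/-- Reduction of the Lagrange system (9) to the polynomial equation (10). -/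
theorem lagrange_system_reduces_to_polynomial
    (d1 d2 t c : ℝ) (hd1 : 0 < d1) (hd2 : 0 < d2)
    (x1 x2 : ℝ) (hx1 : 0 < x1) (hx2 : 0 < x2)
    (h1 : -d1 / (2 * x1 ^ 2) + t * x2 / (2 * x1 ^ 3)
        - c * d1 * x1 ^ (d1 - 1) * x2 ^ d2 = 0)
    (h2 : (t - d2) / (2 * x2 ^ 2) - t / (4 * x1 ^ 2)
        - c * d2 * x1 ^ d1 * x2 ^ (d2 - 1) = 0) :
    2 * t * d1 * x1 ^ 2 - 2 * d1 * d2 * x1 ^ 2 - t * d1 * x2 ^ 2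
      + 2 * d1 * d2 * x1 * x2 - 2 * t * d2 * x2 ^ 2 = 0 := by
  rw [Real.rpow_sub hx1, Real.rpow_one] at h1
  rw [Real.rpow_sub hx2, Real.rpow_one] at h2
  set u := x1 ^ d1 with hu
  set v := x2 ^ d2 with hv
  field_simp at h1 h2
  have key : (2 * t * d1 * x1 ^ 2 - 2 * d1 * d2 * x1 ^ 2 - t * d1 * x2 ^ 2
      + 2 * d1 * d2 * x1 * x2 - 2 * t * d2 * x2 ^ 2) * (-2 * x1 ^ 3 * x2) = 0 := by
    linear_combination (4 * d2 * x1 ^ 3 * x2 ^ 2) * h1 - (d1 * x1 ^ 3 * x2) * h2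
  have hne : (-2 * x1 ^ 3 * x2) ≠ 0 := by positivity
  exact (mul_eq_zero.mp key).resolve_right hne
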